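/- No subgroup of order 16 of PGL₂(ℂ) leaves invariant a subset of the complex projective line ℙ¹(ℂ) of cardinality 3 or 4; that is, if Γ ≤ PGL₂(ℂ) has order 16 and S ⊂ ℙ¹(ℂ) satisfies g·S = S for all g ∈ Γ, then |S| ∉ {3, 4}. -/

import Mathlib

/-- `PGL₂(ℂ)`: the quotient of `GL₂(ℂ)` by its center (the nonzero scalar matrices). -/
abbrev PGL2C : Type _ := GL (Fin 2) ℂ ⧸ Subgroup.center (GL (Fin 2) ℂ)

/-- The Möbius action of (a representative in `GL₂(ℂ)` of an element of `PGL₂(ℂ)`) on the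
complex projective line `ℙ¹(ℂ) = ℙ(ℂ²)`; two representatives of the same element of
`PGL₂(ℂ)` induce the same map. -/
noncomputable def mobius (g : GL (Fin 2) ℂ) :
    Projectivization ℂ (Fin 2 → ℂ) → Projectivization ℂ (Fin 2 → ℂ) :=
  Projectivization.map
    (LinearMap.GeneralLinearGroup.toLinearEquiv (Matrix.GeneralLinearGroup.toLin g)).toLinearMap
    (LinearMap.GeneralLinearGroup.toLinearEquiv (Matrix.GeneralLinearGroup.toLin g)).injective

open Projectivization

noncomputable abbrev P1 := Projectivization ℂ (Fin 2 → ℂ)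

lemma mulVec_ne_zero (g : GL (Fin 2) ℂ) {v : Fin 2 → ℂ} (hv : v ≠ 0) :
    (g : Matrix (Fin 2) (Fin 2) ℂ).mulVec v ≠ 0 := by
  intro h
  apply hv
  have := congrArg (fun w => ((g⁻¹ : GL (Fin 2) ℂ) : Matrix (Fin 2) (Fin 2) ℂ).mulVec w) h
  simp only [Matrix.mulVec_mulVec, Matrix.mulVec_zero] at this
  rw [← Matrix.GeneralLinearGroup.coe_mul, inv_mul_cancel] at this
  simpa using this

lemma mobius_mk (g : GL (Fin 2) ℂ) (v : Fin 2 → ℂ) (hv : v ≠ 0) :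
    mobius g (Projectivization.mk ℂ v hv) =
      Projectivization.mk ℂ ((g : Matrix (Fin 2) (Fin 2) ℂ).mulVec v) (mulVec_ne_zero g hv) := by
  rfl

lemma mobius_mul (g h : GL (Fin 2) ℂ) :
    mobius (g * h) = mobius g ∘ mobius h := by
  funext x
  induction x using Projectivization.ind with
  | h v hv =>
    simp only [mobius_mk, Function.comp_apply]
    congr 1
    rw [Matrix.GeneralLinearGroup.coe_mul, ← Matrix.mulVec_mulVec]

lemma mobius_one : mobius (1 : GL (Fin 2) ℂ) = id := by
  funext x
  induction x using Projectivization.ind with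
  | h v hv =>
    simp only [mobius_mk, id_eq]
    congr 1
    simp

/-- `mobius` as a homomorphism to permutations of `ℙ¹`. -/
noncomputable def mobiusHom : GL (Fin 2) ℂ →* Equiv.Perm P1 where
  toFun g :=
    { toFun := mobius g
      invFun := mobius g⁻¹
      left_inv := fun x => by
        rw [← Function.comp_apply (f := mobius g⁻¹), ← mobius_mul, inv_mul_cancel, mobius_one,
          id_eq]
      right_inv := fun x => by
        rw [← Function.comp_apply (f := mobius g), ← mobius_mul, mul_inv_cancel, mobius_one,
          id_eq] }
  map_one' := by ext x; simp [mobius_one]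
  map_mul' g h := by ext x; simp [mobius_mul]

lemma mem_center_iff_scalar (g : GL (Fin 2) ℂ) :
    g ∈ Subgroup.center (GL (Fin 2) ℂ) ↔
      ∃ a : ℂ, (g : Matrix (Fin 2) (Fin 2) ℂ) = a • (1 : Matrix (Fin 2) (Fin 2) ℂ) := by
  constructor
  · intro hg
    rw [Subgroup.mem_center_iff] at hg
    set A : Matrix (Fin 2) (Fin 2) ℂ := (g : Matrix (Fin 2) (Fin 2) ℂ) with hA
    have h1 : !![(0:ℂ),1;1,0] * A = A * !![(0:ℂ),1;1,0] := by
      have := congrArg Units.val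
        (hg (Matrix.GeneralLinearGroup.mkOfDetNeZero !![(0:ℂ),1;1,0]
          (by norm_num [Matrix.det_fin_two_of])))
      simpa [Matrix.GeneralLinearGroup.mkOfDetNeZero, Matrix.GeneralLinearGroup.mk',
        Units.val_mul, Matrix.unitOfDetInvertible] using this
    have h2 : !![(1:ℂ),0;0,-1] * A = A * !![(1:ℂ),0;0,-1] := by
      have := congrArg Units.val
        (hg (Matrix.GeneralLinearGroup.mkOfDetNeZero !![(1:ℂ),0;0,-1]
          (by norm_num [Matrix.det_fin_two_of])))
      simpa [Matrix.GeneralLinearGroup.mkOfDetNeZero, Matrix.GeneralLinearGroup.mk',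
        Units.val_mul, Matrix.unitOfDetInvertible] using this
    have e1 := Matrix.ext_iff.2 h1
    have e2 := Matrix.ext_iff.2 h2
    have d1 := e1 0 0
    have d2 := e1 0 1
    have d3 := e2 0 1
    have d4 := e2 1 0
    simp [Matrix.mul_apply, Fin.sum_univ_two] at d1 d2 d3 d4
    refine ⟨A 0 0, ?_⟩
    ext i j
    fin_cases i <;> fin_cases j <;>
      simp [Matrix.one_apply] <;>
      first
        | linear_combination d2
        | linear_combination d3 / 2
        | linear_combination -d4 / 2
  · rintro ⟨a, ha⟩
    rw [Subgroup.mem_center_iff]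
    intro h
    apply Units.ext
    show (h : Matrix (Fin 2) (Fin 2) ℂ) * g = (g : Matrix (Fin 2) (Fin 2) ℂ) * h
    rw [ha, Matrix.mul_smul, Matrix.smul_mul, mul_one, one_mul]

lemma det_ne_zero' (g : GL (Fin 2) ℂ) : (g : Matrix (Fin 2) (Fin 2) ℂ).det ≠ 0 := by
  have : IsUnit (g : Matrix (Fin 2) (Fin 2) ℂ) := ⟨g, rfl⟩
  rw [Matrix.isUnit_iff_isUnit_det, isUnit_iff_ne_zero] at this
  exact this

lemma mobius_eq_id_of_scalar {g : GL (Fin 2) ℂ} {a : ℂ}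
    (ha : (g : Matrix (Fin 2) (Fin 2) ℂ) = a • (1 : Matrix (Fin 2) (Fin 2) ℂ)) :
    mobius g = id := by
  have hdet := det_ne_zero' g
  rw [ha] at hdet
  have ha0 : a ≠ 0 := by
    intro h
    rw [h] at hdet
    simp at hdet
  funext x
  induction x using Projectivization.ind with
  | h v hv =>
    rw [mobius_mk, id_eq]
    rw [Projectivization.mk_eq_mk_iff']
    refine ⟨a, ?_⟩
    rw [ha, Matrix.smul_mulVec, Matrix.one_mulVec]

/-- The Möbius action descends to `PGL₂(ℂ)`. -/
noncomputable def pglHom : PGL2C →* Equiv.Perm P1 :=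
  QuotientGroup.lift (Subgroup.center (GL (Fin 2) ℂ)) mobiusHom (by
    intro g hg
    obtain ⟨a, ha⟩ := (mem_center_iff_scalar g).1 hg
    ext x
    show mobius g x = x
    rw [mobius_eq_id_of_scalar ha, id_eq])

@[simp] lemma pglHom_mk (g : GL (Fin 2) ℂ) (x : P1) :
    pglHom (QuotientGroup.mk g) x = mobius g x := rfl

lemma eq_scalar_of_three_fixed (g : GL (Fin 2) ℂ) {x y z : P1}
    (hxy : x ≠ y) (hxz : x ≠ z) (hyz : y ≠ z)
    (hx : mobius g x = x) (hy : mobius g y = y) (hz : mobius g z = z) :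
    ∃ a : ℂ, (g : Matrix (Fin 2) (Fin 2) ℂ) = a • (1 : Matrix (Fin 2) (Fin 2) ℂ) := by
  induction x using Projectivization.ind with
  | h u hu =>
  induction y using Projectivization.ind with
  | h v hv =>
  induction z using Projectivization.ind with
  | h w hw =>
  rw [mobius_mk, Projectivization.mk_eq_mk_iff'] at hx hy hz
  obtain ⟨a, ha⟩ := hx
  obtain ⟨b, hb⟩ := hy
  obtain ⟨c, hc⟩ := hz
  have hli : LinearIndependent ℂ ![u, v] := by
    rw [linearIndependent_fin2]
    refine ⟨by simpa using hv, fun r hr => hxy ?_⟩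
    rw [Projectivization.mk_eq_mk_iff']
    exact ⟨r, by simpa using hr⟩
  have hcard : Fintype.card (Fin 2) = Module.finrank ℂ (Fin 2 → ℂ) := by
    simp [Module.finrank_fin_fun]
  let B := basisOfLinearIndependentOfCardEqFinrank hli hcard
  have hB : ∀ i, B i = ![u, v] i := fun i => by
    rw [coe_basisOfLinearIndependentOfCardEqFinrank]
  have hB0 : B 0 = u := by rw [hB]; rfl
  have hB1 : B 1 = v := by rw [hB]; rfl
  have hrepr : ∀ p : Fin 2 → ℂ, ∃ r0 r1 : ℂ, p = r0 • u + r1 • v := by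
    intro p
    refine ⟨B.repr p 0, B.repr p 1, ?_⟩
    have := B.sum_repr p
    rw [Fin.sum_univ_two, hB0, hB1] at this
    exact this.symm
  obtain ⟨r0, r1, hwrepr⟩ := hrepr w
  have hr0ne : r0 ≠ 0 := by
    intro h0
    exact hyz (((Projectivization.mk_eq_mk_iff' ℂ w v hw hv).2
      ⟨r1, by rw [hwrepr, h0]; simp⟩).symm)
  have hr1ne : r1 ≠ 0 := by
    intro h0
    exact hxz (((Projectivization.mk_eq_mk_iff' ℂ w u hw hu).2
      ⟨r0, by rw [hwrepr, h0]; simp⟩).symm)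
  have hAw : c • w = (r0 * a) • u + (r1 * b) • v := by
    calc c • w = (g : Matrix (Fin 2) (Fin 2) ℂ).mulVec w := hc
    _ = (g : Matrix (Fin 2) (Fin 2) ℂ).mulVec (r0 • u + r1 • v) := by rw [← hwrepr]
    _ = r0 • (g : Matrix (Fin 2) (Fin 2) ℂ).mulVec u
        + r1 • (g : Matrix (Fin 2) (Fin 2) ℂ).mulVec v := by
        rw [Matrix.mulVec_add, Matrix.mulVec_smul, Matrix.mulVec_smul]
    _ = (r0 * a) • u + (r1 * b) • v := by rw [← ha, ← hb, smul_smul, smul_smul]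
  have heq : (r0 * a) • u + (r1 * b) • v = (c * r0) • u + (c * r1) • v := by
    rw [← hAw, hwrepr, smul_add, smul_smul, smul_smul]
  have key : (r0 * a - c * r0) • u + (r1 * b - c * r1) • v = 0 := by
    rw [sub_smul, sub_smul, sub_add_sub_comm, sub_eq_zero]
    exact heq
  have hcoeff := Fintype.linearIndependent_iff.1 hli ![r0 * a - c * r0, r1 * b - c * r1] (by
    rw [Fin.sum_univ_two]
    simpa using key)
  have hac : a = c := by
    have h := hcoeff 0
    simp only [Matrix.cons_val_zero] at h
    apply mul_left_cancel₀ hr0ne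
    linear_combination h
  have hbc : b = c := by
    have h := hcoeff 1
    simp only [Matrix.cons_val_one, Matrix.head_cons, Matrix.cons_val_zero] at h
    apply mul_left_cancel₀ hr1ne
    linear_combination h
  refine ⟨a, ?_⟩
  have hall : ∀ p : Fin 2 → ℂ, (g : Matrix (Fin 2) (Fin 2) ℂ).mulVec p = a • p := by
    intro p
    obtain ⟨s0, s1, hp⟩ := hrepr p
    rw [hp, Matrix.mulVec_add, Matrix.mulVec_smul, Matrix.mulVec_smul, ← ha, ← hb,
      smul_add, smul_smul, smul_smul, smul_smul, smul_smul]
    rw [hac, hbc]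
    ring_nf
  ext i j
  have h := congrFun (hall (Pi.single j 1)) i
  rw [Matrix.mulVec_single] at h
  simp only [MulOpposite.op_one, one_smul, Matrix.col_apply] at h
  rw [h]
  simp [Matrix.one_apply, Pi.single_apply, eq_comm]

/-- No subgroup of order 16 of `PGL₂(ℂ)` leaves invariant a subset of
the complex projective line `ℙ¹(ℂ)` of cardinality 3 or 4: if `Γ ≤ PGL₂(ℂ)` has order 16
and `S ⊆ ℙ¹(ℂ)` satisfies `g • S = S` for all `g ∈ Γ`, then `|S| ∉ {3, 4}`. -/
theorem pgl2_order_sixteen_no_invariant_three_or_four_set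
    (Γ : Subgroup PGL2C) (hΓ : Nat.card Γ = 16)
    (S : Set (Projectivization ℂ (Fin 2 → ℂ)))
    (hinv : ∀ g : GL (Fin 2) ℂ, (QuotientGroup.mk g : PGL2C) ∈ Γ → mobius g '' S = S) :
    S.ncard ≠ 3 ∧ S.ncard ≠ 4 := by
  have main : ∀ n : ℕ, n = 3 ∨ n = 4 → S.ncard = n → False := by
    intro n hn hcard
    have hn0 : n ≠ 0 := by rcases hn with rfl | rfl <;> norm_num
    have hSfin : S.Finite := by
      rw [← Set.not_infinite]
      intro h
      rw [Set.Infinite.ncard h] at hcard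
      exact hn0 hcard.symm
    haveI := hSfin.fintype
    haveI : DecidableEq S := Classical.decEq _
    haveI : DecidableEq P1 := Classical.decEq _
    haveI : Finite Γ := Nat.finite_of_card_ne_zero (by rw [hΓ]; norm_num)
    -- each element of Γ maps S into S
    have hmapsto : ∀ γ : PGL2C, γ ∈ Γ → ∀ x ∈ S, pglHom γ x ∈ S := by
      intro γ hγ x hx
      obtain ⟨g, rfl⟩ := QuotientGroup.mk_surjective γ
      rw [pglHom_mk]
      rw [← hinv g hγ]
      exact Set.mem_image_of_mem _ hx
    have hiff : ∀ γ : Γ, ∀ x : P1, x ∈ S ↔ pglHom (γ : PGL2C) x ∈ S := by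
      intro γ x
      constructor
      · exact hmapsto _ γ.2 x
      · intro h
        have h2 := hmapsto _ (inv_mem γ.2) _ h
        rwa [← Equiv.Perm.mul_apply, ← map_mul, inv_mul_cancel, map_one,
          Equiv.Perm.one_apply] at h2
    -- the permutation representation of Γ on S
    let ρ : Γ →* Equiv.Perm S :=
      { toFun := fun γ => Equiv.Perm.subtypePerm (pglHom (γ : PGL2C)) (fun x => (hiff γ x).symm)
        map_one' := by
          ext x
          simp [Equiv.Perm.subtypePerm_apply]
        map_mul' := fun γ δ => by
          ext x
          simp [Equiv.Perm.subtypePerm_apply]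
          rfl }
    have hker : ρ.ker ≠ ⊥ := by
      intro hbot
      have hinj : Function.Injective ρ := (MonoidHom.ker_eq_bot_iff ρ).1 hbot
      have hdvd : (16 : ℕ) ∣ Nat.card (Equiv.Perm S) := by
        rw [← hΓ]
        exact Subgroup.card_dvd_of_injective ρ hinj
      rw [Nat.card_eq_fintype_card, Fintype.card_perm] at hdvd
      have hcardS : Fintype.card S = n := by
        rw [← Nat.card_eq_fintype_card, Nat.card_coe_set_eq, hcard]
      rw [hcardS] at hdvd
      rcases hn with rfl | rfl <;> norm_num [Nat.factorial] at hdvd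
    obtain ⟨γ0, hγ0ne⟩ := Subgroup.ne_bot_iff_exists_ne_one.1 hker
    have hγker : ρ (γ0 : Γ) = 1 := γ0.2
    have hδne : ((γ0 : Γ) : PGL2C) ≠ 1 := by
      intro h
      apply hγ0ne
      apply Subtype.ext
      apply Subtype.ext
      exact h
    obtain ⟨g, hg⟩ := QuotientGroup.mk_surjective (((γ0 : Γ) : PGL2C))
    have hfix : ∀ x ∈ S, mobius g x = x := by
      intro x hx
      have := congrArg (fun f : Equiv.Perm S => (f ⟨x, hx⟩ : P1)) hγker
      simp only [Equiv.Perm.one_apply] at this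
      rw [show (ρ (γ0 : Γ) ⟨x, hx⟩ : P1) = pglHom (((γ0 : Γ) : PGL2C)) x from rfl] at this
      rwa [← hg, pglHom_mk] at this
    -- pick three distinct points of S
    obtain ⟨t, hts, htcard⟩ := Finset.exists_subset_card_eq (s := hSfin.toFinset) (n := 3) (by
      rw [← Set.ncard_eq_toFinset_card _ hSfin, hcard]
      rcases hn with rfl | rfl <;> norm_num)
    obtain ⟨x, y, z, hxy, hxz, hyz, hteq⟩ := Finset.card_eq_three.1 htcard
    subst hteq
    have hmem : ∀ p ∈ ({x, y, z} : Finset P1), p ∈ S := fun p hp =>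
      (Set.Finite.mem_toFinset hSfin).1 (hts hp)
    obtain ⟨a, ha⟩ := eq_scalar_of_three_fixed g hxy hxz hyz
      (hfix x (hmem x (by simp))) (hfix y (hmem y (by simp))) (hfix z (hmem z (by simp)))
    have hcen : g ∈ Subgroup.center (GL (Fin 2) ℂ) := (mem_center_iff_scalar g).2 ⟨a, ha⟩
    apply hδne
    rw [← hg]
    exact (QuotientGroup.eq_one_iff g).2 hcen
  exact ⟨fun h => main 3 (Or.inl rfl) h, fun h => main 4 (Or.inr rfl) h⟩
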